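/- arXiv:math/0104283 — 2 statements merged into one kernel-verified Lean document; each statement's English description precedes it below -/
import Mathlib

section
/- Let R be a K-algebra with an (ℕ^n, ⪯)-filtration F such that F_0(R) = Λ, and let x_1, …, x_s ∈ R be elements whose principal symbols y_i = x_i + F_{≺α_i}(R) (where α_i = mdeg(x_i)) are such that the standard monomials { y^γ = y_1^{γ_1}⋯y_s^{γ_s} : γ ∈ ℕ^s } are left Λ-linearly independent in G^F(R). Then the standard monomials { x^γ = x_1^{γ_1}⋯x_s^{γ_s} : γ ∈ ℕ^s } are left Λ-linearly independent in R. -/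
/-- An admissible order on ℕ^n. -/
def IsAdmissibleOrder {n : ℕ} (r : (Fin n → ℕ) → (Fin n → ℕ) → Prop) : Prop :=
  IsLinearOrder (Fin n → ℕ) r ∧
    (∀ α β γ : Fin n → ℕ, r α β → r (α + γ) (β + γ)) ∧
    (∀ α : Fin n → ℕ, r 0 α)

section
variable {K : Type*} [CommRing K] {R : Type*} [Ring R] [Algebra K R] {n s : ℕ}

/-- `F` is an (ℕ^n, r)-filtration of the K-algebra R. -/
def IsMultiFiltration (r : (Fin n → ℕ) → (Fin n → ℕ) → Prop)
    (F : (Fin n → ℕ) → Submodule K R) : Prop :=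
  (∀ α β, r α β → F α ≤ F β) ∧
    (∀ α β, ∀ x ∈ F α, ∀ y ∈ F β, x * y ∈ F (α + β)) ∧
    (∀ x : R, ∃ α, x ∈ F α) ∧ (1 : R) ∈ F 0

/-- F_{≺α}(R) = ⋃_{β ≺ α} F_β(R) (as a submodule of R it also contains 0). -/
def Fprec (r : (Fin n → ℕ) → (Fin n → ℕ) → Prop)
    (F : (Fin n → ℕ) → Submodule K R) (α : Fin n → ℕ) : Set R :=
  {x | x = 0 ∨ ∃ β, r β α ∧ β ≠ α ∧ x ∈ F β}

/-- `d` is the multi-degree of `x`. -/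
def IsMdeg (r : (Fin n → ℕ) → (Fin n → ℕ) → Prop)
    (F : (Fin n → ℕ) → Submodule K R) (d : Fin n → ℕ) (x : R) : Prop :=
  x ∈ F d ∧ ∀ β, x ∈ F β → r d β

/-- The standard (ordered) monomial x^γ = x_1^{γ_1} ⋯ x_s^{γ_s}. -/
def stdMono (x : Fin s → R) (γ : Fin s → ℕ) : R :=
  (List.ofFn fun i => x i ^ γ i).prod

lemma exists_rmax {β ι : Type*} (r : β → β → Prop)
    (htrans : ∀ a b c : β, r a b → r b c → r a c)
    (htot : ∀ a b : β, r a b ∨ r b a)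
    (f : ι → β) (S : Finset ι) (hS : S.Nonempty) :
    ∃ m ∈ S, ∀ b ∈ S, r (f b) (f m) := by
  classical
  induction S using Finset.induction_on with
  | empty => exact absurd hS (by simp)
  | @insert c S hnotmem ih =>
    rcases S.eq_empty_or_nonempty with rfl | hS'
    · exact ⟨c, by simp, by simpa using (htot (f c) (f c)).elim id id⟩
    · obtain ⟨m, hm, hmax⟩ := ih hS'
      rcases htot (f c) (f m) with h | h
      · refine ⟨m, Finset.mem_insert_of_mem hm, fun b hb => ?_⟩
        rcases Finset.mem_insert.1 hb with rfl | hb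
        · exact h
        · exact hmax b hb
      · refine ⟨c, Finset.mem_insert_self _ _, fun b hb => ?_⟩
        rcases Finset.mem_insert.1 hb with rfl | hb
        · exact (htot (f b) (f b)).elim id id
        · exact htrans _ _ _ (hmax b hb) h

lemma pow_mem_filt {r : (Fin n → ℕ) → (Fin n → ℕ) → Prop}
    {F : (Fin n → ℕ) → Submodule K R} (hF : IsMultiFiltration r F)
    {d : Fin n → ℕ} {y : R} (hy : y ∈ F d) (k : ℕ) : y ^ k ∈ F (k • d) := by
  induction k with
  | zero => simpa using hF.2.2.2
  | succ k ih =>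
    have := hF.2.1 _ _ _ ih _ hy
    rw [pow_succ, succ_nsmul]
    exact this

lemma stdMono_mem_filt {r : (Fin n → ℕ) → (Fin n → ℕ) → Prop}
    {F : (Fin n → ℕ) → Submodule K R} (hF : IsMultiFiltration r F) :
    ∀ {s : ℕ} (x : Fin s → R) (α : Fin s → Fin n → ℕ),
    (∀ i, x i ∈ F (α i)) → ∀ γ : Fin s → ℕ,
    stdMono x γ ∈ F (∑ i, γ i • α i) := by
  intro s
  induction s with
  | zero =>
    intro x α hx γ
    simpa [stdMono] using hF.2.2.2
  | succ s ih =>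
    intro x α hx γ
    have h1 : stdMono x γ = x 0 ^ γ 0 * stdMono (fun i => x i.succ) (fun i => γ i.succ) := by
      simp [stdMono, List.ofFn_succ]
    rw [h1, Fin.sum_univ_succ]
    exact hF.2.1 _ _ _ (pow_mem_filt hF (hx 0) (γ 0)) _
      (ih (fun i => x i.succ) (fun i => α i.succ) (fun i => hx i.succ) (fun i => γ i.succ))

lemma fprec_add {r : (Fin n → ℕ) → (Fin n → ℕ) → Prop}
    {F : (Fin n → ℕ) → Submodule K R} (hF : IsMultiFiltration r F)
    (htot : ∀ a b : Fin n → ℕ, r a b ∨ r b a) {δ : Fin n → ℕ} {u v : R}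
    (hu : u ∈ Fprec r F δ) (hv : v ∈ Fprec r F δ) : u + v ∈ Fprec r F δ := by
  rcases hu with rfl | ⟨β₁, hβ₁, hne₁, hu⟩
  · simpa using hv
  rcases hv with rfl | ⟨β₂, hβ₂, hne₂, hv⟩
  · exact Or.inr ⟨β₁, hβ₁, hne₁, by simpa using hu⟩
  rcases htot β₁ β₂ with h | h
  · exact Or.inr ⟨β₂, hβ₂, hne₂, (F β₂).add_mem (hF.1 _ _ h hu) hv⟩
  · exact Or.inr ⟨β₁, hβ₁, hne₁, (F β₁).add_mem hu (hF.1 _ _ h hv)⟩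

/-- If the principal symbols y_i = x_i + F_{≺α_i} of x_1, …, x_s have left
Λ-linearly independent standard monomials in G^F(R) (Λ = F_0), then the standard
monomials in the x_i are left Λ-linearly independent in R.
The independence of the monomials y^γ in the graded algebra is expressed in each
degree δ: a homogeneous combination Σ_{γ·M = δ} a_γ x^γ lying in F_{≺δ} has all
coefficients zero. -/
theorem stmt9 (r : (Fin n → ℕ) → (Fin n → ℕ) → Prop) (hr : IsAdmissibleOrder r)
    (F : (Fin n → ℕ) → Submodule K R) (hF : IsMultiFiltration r F)
    (x : Fin s → R) (α : Fin s → Fin n → ℕ)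
    (hx : ∀ i, IsMdeg r F (α i) (x i))
    (hyindep : ∀ δ : Fin n → ℕ, ∀ Γ : Finset (Fin s → ℕ),
      (∀ γ ∈ Γ, ∑ i, γ i • α i = δ) →
      ∀ a : (Fin s → ℕ) → R, (∀ γ ∈ Γ, a γ ∈ F 0) →
      (∑ γ ∈ Γ, a γ * stdMono x γ) ∈ Fprec r F δ → ∀ γ ∈ Γ, a γ = 0) :
    ∀ Γ : Finset (Fin s → ℕ), ∀ a : (Fin s → ℕ) → R,
      (∀ γ ∈ Γ, a γ ∈ F 0) → (∑ γ ∈ Γ, a γ * stdMono x γ) = 0 →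
      ∀ γ ∈ Γ, a γ = 0 := by
  classical
  have htrans : ∀ a b c : Fin n → ℕ, r a b → r b c → r a c :=
    fun a b c => hr.1.toIsPartialOrder.toIsPreorder.toIsTrans.trans a b c
  have htot : ∀ a b : Fin n → ℕ, r a b ∨ r b a := fun a b => hr.1.toTotal.total a b
  intro Γ a ha hsum γ₀ hγ₀
  by_contra hne
  set d : (Fin s → ℕ) → Fin n → ℕ := fun γ => ∑ i, γ i • α i with hd
  -- the set of nonzero coefficients
  set S : Finset (Fin s → ℕ) := Γ.filter (fun γ => a γ ≠ 0) with hS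
  have hSne : S.Nonempty := ⟨γ₀, Finset.mem_filter.2 ⟨hγ₀, hne⟩⟩
  obtain ⟨m, hmS, hmax⟩ := exists_rmax r htrans htot d S hSne
  set δ : Fin n → ℕ := d m with hδ
  set Γ₁ : Finset (Fin s → ℕ) := Γ.filter (fun γ => d γ = δ) with hΓ₁
  set Γ₂ : Finset (Fin s → ℕ) := Γ.filter (fun γ => ¬ d γ = δ) with hΓ₂
  have hsplit : (∑ γ ∈ Γ₁, a γ * stdMono x γ) + (∑ γ ∈ Γ₂, a γ * stdMono x γ) = 0 := by
    rw [hΓ₁, hΓ₂, Finset.sum_filter_add_sum_filter_not]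
    exact hsum
  have hterm : ∀ γ ∈ Γ, a γ * stdMono x γ ∈ F (d γ) := fun γ hγ => by
    have := hF.2.1 0 (d γ) _ (ha γ hγ) _
      (stdMono_mem_filt hF x α (fun i => (hx i).1) γ)
    simpa using this
  have h2 : (∑ γ ∈ Γ₂, a γ * stdMono x γ) ∈ Fprec r F δ := by
    refine Finset.sum_induction _ (· ∈ Fprec r F δ)
      (fun u v hu hv => fprec_add hF htot hu hv) (Or.inl rfl) ?_
    intro γ hγ
    have hγΓ : γ ∈ Γ := (Finset.mem_filter.1 hγ).1
    have hγne : d γ ≠ δ := (Finset.mem_filter.1 hγ).2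
    by_cases haγ : a γ = 0
    · exact Or.inl (by simp [haγ])
    · have hγS : γ ∈ S := Finset.mem_filter.2 ⟨hγΓ, haγ⟩
      exact Or.inr ⟨d γ, hmax γ hγS, hγne, hterm γ hγΓ⟩
  have h1 : (∑ γ ∈ Γ₁, a γ * stdMono x γ) ∈ Fprec r F δ := by
    have heq : (∑ γ ∈ Γ₁, a γ * stdMono x γ) = -(∑ γ ∈ Γ₂, a γ * stdMono x γ) := by
      exact eq_neg_of_add_eq_zero_left hsplit
    rw [heq]
    rcases h2 with h | ⟨β, hβ, hβne, hmem⟩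
    · exact Or.inl (by simp [h])
    · exact Or.inr ⟨β, hβ, hβne, (F β).neg_mem hmem⟩
  have := hyindep δ Γ₁ (fun γ hγ => (Finset.mem_filter.1 hγ).2) a
    (fun γ hγ => ha γ (Finset.mem_filter.1 hγ).1) h1
  have hmΓ₁ : m ∈ Γ₁ := Finset.mem_filter.2 ⟨(Finset.mem_filter.1 hmS).1, rfl⟩
  exact (Finset.mem_filter.1 hmS).2 (this m hmΓ₁)

end
end

section
/- Let R be a K-algebra with an (ℕ^n, ⪯)-filtration F such that F_0(R) = Λ and such that G^F(R) is a free left Λ-module with basis the standard monomials { y^γ : γ ∈ ℕ^s } in homogeneous elements y_1, …, y_s of degrees α_1, …, α_s. Choose x_i ∈ F_{α_i}(R) lifting y_i. Then every r ∈ R with mdeg(r) = δ can be written r = Σ_{γ·M ⪯ δ} a_γ x^γ with a_γ ∈ Λ, where M is the matrix with rows α_1, …, α_s and γ·M = γ_1 α_1 + ⋯ + γ_s α_s. Consequently { x^γ : γ ∈ ℕ^s } generates R as a left Λ-module. -/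
section
variable {K : Type*} [CommRing K] {R : Type*} [Ring R] [Algebra K R] {n s : ℕ}

/-- If G^F(R) is a free left Λ-module (Λ = F_0) on the standard monomials in
homogeneous elements y_i of degrees α_i lifted by x_i ∈ F_{α_i}(R) — i.e. every
element of F_δ is congruent modulo F_{≺δ} to a homogeneous combination
Σ_{γ·M = δ} a_γ x^γ — then every r ∈ F_δ can be written as Σ_{γ·M ⪯ δ} a_γ x^γ
with a_γ ∈ Λ; consequently the x^γ generate R as a left Λ-module. -/
theorem stmt10 (r : (Fin n → ℕ) → (Fin n → ℕ) → Prop) (hr : IsAdmissibleOrder r)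
    (F : (Fin n → ℕ) → Submodule K R) (hF : IsMultiFiltration r F)
    (x : Fin s → R) (α : Fin s → Fin n → ℕ) (hx : ∀ i, x i ∈ F (α i))
    (hspan : ∀ δ : Fin n → ℕ, ∀ z ∈ F δ, ∃ Γ : Finset (Fin s → ℕ),
      (∀ γ ∈ Γ, ∑ i, γ i • α i = δ) ∧ ∃ a : (Fin s → ℕ) → R,
      (∀ γ ∈ Γ, a γ ∈ F 0) ∧ z - ∑ γ ∈ Γ, a γ * stdMono x γ ∈ Fprec r F δ) :
    (∀ δ : Fin n → ℕ, ∀ z ∈ F δ, ∃ Γ : Finset (Fin s → ℕ),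
      (∀ γ ∈ Γ, r (∑ i, γ i • α i) δ) ∧ ∃ a : (Fin s → ℕ) → R,
      (∀ γ ∈ Γ, a γ ∈ F 0) ∧ z = ∑ γ ∈ Γ, a γ * stdMono x γ) ∧
    (∀ z : R, ∃ Γ : Finset (Fin s → ℕ), ∃ a : (Fin s → ℕ) → R,
      (∀ γ ∈ Γ, a γ ∈ F 0) ∧ z = ∑ γ ∈ Γ, a γ * stdMono x γ) := by
  obtain ⟨hlin, hadd, hzero⟩ := hr
  haveI := hlin
  obtain ⟨hmono, hmul, hexh, hone⟩ := hF
  have hle : ∀ β δ : Fin n → ℕ, β ≤ δ → r β δ := by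
    intro β δ h
    have h2 : r (0 + β) ((δ - β) + β) := hadd 0 (δ - β) β (hzero _)
    have h3 : (δ - β) + β = δ := by
      funext i
      exact Nat.sub_add_cancel (h i)
    rwa [zero_add, h3] at h2
  haveI : IsStrictOrder (Fin n → ℕ) (fun β δ : Fin n → ℕ => r β δ ∧ β ≠ δ) :=
    { irrefl := fun a h => h.2 rfl
      trans := fun a b c hab hbc =>
        ⟨trans_of r hab.1 hbc.1, fun h => hab.2 (antisymm hab.1 (h ▸ hbc.1))⟩ }
  have hwf : WellFounded (fun β δ : Fin n → ℕ => r β δ ∧ β ≠ δ) := by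
    rw [RelEmbedding.wellFounded_iff_isEmpty]
    constructor
    intro f
    have hpwo : Set.IsPWO (Set.univ : Set (Fin n → ℕ)) := Set.isPWO_of_wellQuasiOrderedLE Set.univ
    obtain ⟨i, j, hij, hle'⟩ := hpwo.exists_lt (f := fun k => f k) (fun _ => Set.mem_univ _)
    have h1 : r (f i) (f j) := hle _ _ hle'
    have h2 : r (f j) (f i) ∧ f j ≠ f i := f.map_rel_iff.2 hij
    exact h2.2 (antisymm h2.1 h1)
  have main : ∀ δ : Fin n → ℕ, ∀ z ∈ F δ, ∃ Γ : Finset (Fin s → ℕ),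
      (∀ γ ∈ Γ, r (∑ i, γ i • α i) δ) ∧ ∃ a : (Fin s → ℕ) → R,
      (∀ γ ∈ Γ, a γ ∈ F 0) ∧ z = ∑ γ ∈ Γ, a γ * stdMono x γ := by
    intro δ
    induction δ using hwf.induction with
    | _ δ IH =>
      intro z hz
      obtain ⟨Γ₀, hΓ₀, a, ha, hw⟩ := hspan δ z hz
      rcases hw with h0 | ⟨β, hβδ, hβne, hwβ⟩
      · refine ⟨Γ₀, ?_, a, ha, ?_⟩
        · intro γ hγ
          rw [hΓ₀ γ hγ]
          exact refl_of r δ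
        · rw [← sub_eq_zero]
          exact h0
      · obtain ⟨Γ₁, hΓ₁, b, hb, hwb⟩ := IH β ⟨hβδ, hβne⟩ _ hwβ
        refine ⟨Γ₀ ∪ Γ₁, ?_,
          fun γ => (if γ ∈ Γ₀ then a γ else 0) + (if γ ∈ Γ₁ then b γ else 0), ?_, ?_⟩
        · intro γ hγ
          rcases Finset.mem_union.1 hγ with h | h
          · rw [hΓ₀ γ h]; exact refl_of r δ
          · exact trans_of r (hΓ₁ γ h) hβδ
        · intro γ hγ
          apply Submodule.add_mem <;> split <;>
            first
            | exact ha γ ‹_› | exact hb γ ‹_› | exact Submodule.zero_mem _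
        · have hz' : z = (∑ γ ∈ Γ₀, a γ * stdMono x γ) + ∑ γ ∈ Γ₁, b γ * stdMono x γ := by
            rw [← hwb]; abel
          rw [hz']
          simp only [add_mul, ite_mul, zero_mul]
          rw [Finset.sum_add_distrib, Finset.sum_ite_mem, Finset.sum_ite_mem,
            Finset.union_inter_cancel_left, Finset.union_inter_cancel_right]
  refine ⟨main, fun z => ?_⟩
  obtain ⟨δ, hδ⟩ := hexh z
  obtain ⟨Γ, _, a, ha, hz⟩ := main δ z hδ
  exact ⟨Γ, a, ha, hz⟩

end
end
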